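/- Let ω ∈ (−1/2,1/2) be a quadratic irrational and let V be the Nearest Integer map, V(x) = |1/x| − ⌊|1/x| + 1/2⌋ (that is, |1/x| minus the integer nearest to |1/x|). Then ω is purely periodic under V (i.e. V^[p](ω) = ω for some integer p ≥ 1) if and only if its Galois conjugate ω' satisfies: ω' ≤ −τ − 1 in case ω < 0, or ω' ≤ −τ in case ω > 0, where τ = (1+√5)/2 is the golden ratio. -/

import Mathlib

/-- The golden ratio `τ = (1 + √5)/2`. -/
noncomputable def goldenRatio' : ℝ := (1 + Real.sqrt 5) / 2

/-- The Nearest Integer map `x ↦ |1/x| - ⌊|1/x| + 1/2⌋` (i.e. `|1/x|` minus the integer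
nearest to `|1/x|`) on irrationals, extended by `0` at the remaining points. -/
noncomputable def nearestIntMap (x : ℝ) : ℝ :=
  open Classical in
  if Irrational x then |1 / x| - (⌊|1 / x| + 1 / 2⌋ : ℤ) else 0

namespace NIM

local notation "τ" => goldenRatio'

lemma sqrt5_lt : Real.sqrt 5 < 3 := by
  rw [show (3:ℝ) = Real.sqrt 9 by rw [show (9:ℝ) = 3^2 by norm_num, Real.sqrt_sq]; norm_num]
  exact Real.sqrt_lt_sqrt (by norm_num) (by norm_num)

lemma sqrt5_gt : 2 < Real.sqrt 5 := by
  rw [show (2:ℝ) = Real.sqrt 4 by rw [show (4:ℝ) = 2^2 by norm_num, Real.sqrt_sq]; norm_num]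
  exact Real.sqrt_lt_sqrt (by norm_num) (by norm_num)

lemma tau_gt : 3/2 < τ := by unfold goldenRatio'; nlinarith [sqrt5_gt]
lemma tau_lt : τ < 2 := by unfold goldenRatio'; nlinarith [sqrt5_lt]
lemma tau_sq : τ^2 = τ + 1 := by
  unfold goldenRatio'
  have h5 : Real.sqrt 5 ^ 2 = 5 := Real.sq_sqrt (by norm_num)
  nlinarith [h5]
lemma tau_pos : 0 < τ := by linarith [tau_gt]
lemma tau_irr : Irrational τ := by
  unfold goldenRatio'
  have h5 : Irrational (Real.sqrt 5) := by simpa using (Nat.prime_five.irrational_sqrt)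
  have h1 : Irrational ((1:ℚ) + Real.sqrt 5) := h5.ratCast_add 1
  have := h1.div_intCast (by norm_num : (2:ℤ) ≠ 0)
  push_cast at this ⊢
  convert this using 2

/-- one over tau -/
lemma tau_inv : τ * (τ - 1) = 1 := by nlinarith [tau_sq]
lemma tau_inv2 : (τ + 1) * (2 - τ) = 1 := by nlinarith [tau_sq]


/-- A state: a quadratic irrational `x` in `(-1/2,1/2)` together with its Galois
conjugate `y` and an integer quadratic vanishing at both. -/
structure St where
  x : ℝ
  y : ℝ
  a : ℤ
  b : ℤ
  c : ℤ
  ha : a ≠ 0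
  hx1 : -(1:ℝ)/2 < x
  hx2 : x < 1/2
  hirr : Irrational x
  hb : (b:ℝ) = -(a:ℝ) * (x + y)
  hc : (c:ℝ) = (a:ℝ) * x * y

namespace St

variable (s : St)

lemma haR : (s.a : ℝ) ≠ 0 := Int.cast_ne_zero.mpr s.ha

lemma x_ne : s.x ≠ 0 := s.hirr.ne_zero

lemma y_eq : s.y = -(s.b:ℝ)/s.a - s.x := by
  have h := s.hb
  have ha := s.haR
  field_simp
  nlinarith [h]

lemma y_irr : Irrational s.y := by
  rw [s.y_eq]
  have : Irrational (((-s.b : ℚ)/(s.a:ℚ) : ℚ) - s.x) := s.hirr.ratCast_sub _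
  convert this using 2
  push_cast
  ring

lemma y_ne : s.y ≠ 0 := s.y_irr.ne_zero

lemma y_ne_x : s.y ≠ s.x := by
  intro h
  have hb := s.hb
  rw [h] at hb
  have ha := s.haR
  have : s.x = -(s.b:ℝ)/(2*s.a) := by
    field_simp
    nlinarith [hb]
  apply s.hirr.ne_rat ((-s.b : ℚ)/(2*s.a))
  rw [this]; push_cast; ring

lemma cR_ne : (s.c : ℝ) ≠ 0 := by
  rw [s.hc]
  exact mul_ne_zero (mul_ne_zero s.haR s.x_ne) s.y_ne

lemma c_ne : s.c ≠ 0 := fun h => s.cR_ne (by rw [h]; norm_num)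

lemma root_x : (s.a:ℝ) * s.x^2 + s.b * s.x + s.c = 0 := by
  rw [s.hb, s.hc]; ring

lemma root_y : (s.a:ℝ) * s.y^2 + s.b * s.y + s.c = 0 := by
  rw [s.hb, s.hc]; ring

/-- sign of x -/
noncomputable def e : ℤ := if 0 < s.x then 1 else -1

noncomputable def m : ℤ := round |1 / s.x|

lemma e_sq : ((s.e : ℝ))^2 = 1 := by
  unfold e; split <;> norm_num

lemma e_ne : (s.e : ℝ) ≠ 0 := by unfold e; split <;> norm_num

lemma abs_eq : |1 / s.x| = (s.e : ℝ) / s.x := by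
  unfold e
  rcases lt_or_gt_of_ne s.x_ne with h | h
  · rw [if_neg (by linarith), abs_of_neg (by simpa using one_div_neg.mpr h)]
    push_cast; ring
  · rw [if_pos h, abs_of_pos (by simpa using one_div_pos.mpr h)]
    push_cast; ring

lemma abs_gt2 : 2 < |1 / s.x| := by
  have hx : |s.x| < 1/2 := abs_lt.mpr ⟨by linarith [s.hx1], s.hx2⟩
  have hx0 : 0 < |s.x| := abs_pos.mpr s.x_ne
  rw [abs_div, abs_one]
  rw [lt_div_iff₀ hx0]
  linarith

lemma m_ge2 : 2 ≤ s.m := by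
  have h1 : |(|1/s.x|) - s.m| ≤ 1/2 := abs_sub_round _
  have := s.abs_gt2
  obtain ⟨h2, h3⟩ := abs_le.mp h1
  have h4 : (1:ℝ) < (s.m : ℝ) := by linarith
  have : (1:ℤ) < s.m := by exact_mod_cast h4
  omega

lemma mR_ge2 : (2:ℝ) ≤ (s.m : ℝ) := by exact_mod_cast s.m_ge2

lemma vx_mem : -(1:ℝ)/2 < |1/s.x| - s.m ∧ |1/s.x| - s.m < 1/2 := by
  have h1 : |(|1/s.x|) - s.m| ≤ 1/2 := abs_sub_round _
  obtain ⟨h2, h3⟩ := abs_le.mp h1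
  have hirr : Irrational |1/s.x| := by
    rcases abs_choice (1/s.x) with h | h <;> rw [h]
    · simpa [one_div] using s.hirr.inv
    · simpa [one_div] using s.hirr.inv.neg
  constructor
  · rcases lt_or_eq_of_le h2 with h | h
    · linarith
    · exfalso
      apply (hirr.sub_intCast s.m).ne_rat (-(1/2))
      push_cast
      linarith
  · rcases lt_or_eq_of_le h3 with h | h
    · linarith
    · exfalso
      apply (hirr.sub_intCast s.m).ne_rat (1/2)
      push_cast
      linarith

lemma vx_irr : Irrational ((s.e:ℝ)/s.x - s.m) := by
  have : Irrational ((s.e:ℝ)/s.x) := by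
    rw [← s.abs_eq]
    rcases abs_choice (1/s.x) with h | h <;> rw [h]
    · simpa [one_div] using s.hirr.inv
    · simpa [one_div] using s.hirr.inv.neg
  exact this.sub_intCast s.m

/-- The step map on states. -/
noncomputable def next : St where
  x := (s.e:ℝ)/s.x - s.m
  y := (s.e:ℝ)/s.y - s.m
  a := s.c
  b := 2*s.c*s.m + s.e*s.b
  c := s.c*s.m*s.m + s.e*s.b*s.m + s.a
  ha := s.c_ne
  hx1 := by rw [← s.abs_eq]; exact s.vx_mem.1
  hx2 := by rw [← s.abs_eq]; exact s.vx_mem.2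
  hirr := s.vx_irr
  hb := by
    have hx := s.x_ne; have hy := s.y_ne
    have hb := s.hb; have hc := s.hc
    have : s.e = 1 ∨ s.e = -1 := by unfold e; split; exact Or.inl rfl; exact Or.inr rfl
    rcases this with h | h <;> rw [h] <;> push_cast <;> rw [hb, hc] <;> field_simp <;> ring
  hc := by
    have hx := s.x_ne; have hy := s.y_ne
    have hb := s.hb; have hc := s.hc
    have : s.e = 1 ∨ s.e = -1 := by unfold e; split; exact Or.inl rfl; exact Or.inr rfl
    rcases this with h | h <;> rw [h] <;> push_cast <;> rw [hb, hc] <;> field_simp <;> ring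

lemma next_x : (s.next).x = (s.e:ℝ)/s.x - s.m := rfl
lemma next_y : (s.next).y = (s.e:ℝ)/s.y - s.m := rfl

lemma next_x_nim : (s.next).x = nearestIntMap s.x := by
  rw [nearestIntMap, if_pos s.hirr, next_x, ← s.abs_eq, ← round_eq]
  rfl

/-- if m = 2 then next x is positive -/
lemma m2_pos (h : s.m = 2) : 0 < (s.next).x := by
  rw [next_x, ← s.abs_eq, h]
  have := s.abs_gt2
  push_cast
  linarith

lemma inv_x : s.x = (s.e:ℝ)/((s.m:ℝ) + (s.next).x) := by
  rw [next_x]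
  have hx := s.x_ne
  have hd : (s.m:ℝ) + ((s.e:ℝ)/s.x - s.m) = (s.e:ℝ)/s.x := by ring
  rw [hd, div_div_eq_mul_div, mul_comm, mul_div_assoc, div_self s.e_ne, mul_one]

lemma inv_y : s.y = (s.e:ℝ)/((s.m:ℝ) + (s.next).y) := by
  rw [next_y]
  have hy := s.y_ne
  have hd : (s.m:ℝ) + ((s.e:ℝ)/s.y - s.m) = (s.e:ℝ)/s.y := by ring
  rw [hd, div_div_eq_mul_div, mul_comm, mul_div_assoc, div_self s.e_ne, mul_one]

lemma e_pos (h : 0 < s.x) : s.e = 1 := if_pos h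
lemma e_neg (h : s.x < 0) : s.e = -1 := if_neg (by linarith)

/-- discriminant -/
def disc : ℤ := s.b^2 - 4*s.a*s.c

lemma disc_next : s.next.disc = s.disc := by
  unfold disc next
  simp only
  have : s.e = 1 ∨ s.e = -1 := by unfold e; split; exact Or.inl rfl; exact Or.inr rfl
  rcases this with h | h <;> rw [h] <;> ring

lemma disc_eq : (s.disc : ℝ) = (s.a:ℝ)^2 * (s.x - s.y)^2 := by
  unfold disc
  push_cast
  rw [s.hb, s.hc]
  ring

/-- the reduced condition -/
def Red : Prop :=
  (s.x < 0 ∧ s.y ≤ -goldenRatio' - 1) ∨ (0 < s.x ∧ s.y ≤ -goldenRatio')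

lemma Red.y_le (h : s.Red) : s.y ≤ -goldenRatio' := by
  rcases h with ⟨_, h⟩ | ⟨_, h⟩ <;> linarith

lemma Red.y_neg (h : s.Red) : s.y < 0 := by
  have := h.y_le; have := NIM.tau_pos; linarith

lemma x_pos_or_neg : s.x < 0 ∨ 0 < s.x := lt_or_gt_of_ne s.x_ne

lemma next_x_ne : (s.next).x ≠ 0 := (s.next).x_ne

lemma m_ge3 (h : (s.next).x < 0) : 3 ≤ s.m := by
  have h2 := s.m_ge2
  rcases eq_or_lt_of_le h2 with h' | h'
  · exfalso; have := s.m2_pos h'.symm; linarith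
  · omega

lemma red_next (h : s.Red) : (s.next).Red := by
  have htau1 := NIM.tau_gt
  have htau2 := NIM.tau_lt
  have hm2 := s.mR_ge2
  rcases h with ⟨hx, hy⟩ | ⟨hx, hy⟩
  · -- x < 0, y ≤ -τ-1, e = -1
    have he : s.e = -1 := s.e_neg hx
    have hy0 : s.y < 0 := by linarith
    have hyy : -(1:ℝ)/s.y ≤ 2 - goldenRatio' := by
      rw [div_le_iff_of_neg hy0]
      nlinarith [NIM.tau_inv2]
    have hty : (s.next).y ≤ 2 - goldenRatio' - s.m := by
      rw [next_y, he]
      push_cast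
      linarith
    rcases (s.next).x_pos_or_neg with h' | h'
    · left
      refine ⟨h', ?_⟩
      have h3 : (3:ℝ) ≤ (s.m:ℝ) := by exact_mod_cast s.m_ge3 h'
      linarith
    · right
      exact ⟨h', by linarith⟩
  · -- x > 0, y ≤ -τ, e = 1
    have he : s.e = 1 := s.e_pos hx
    have hy0 : s.y < 0 := by linarith
    have hyy : (1:ℝ)/s.y < 0 := by exact div_neg_of_pos_of_neg one_pos hy0
    have hty : (s.next).y < -(s.m:ℝ) := by
      rw [next_y, he]
      push_cast
      linarith
    rcases (s.next).x_pos_or_neg with h' | h'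
    · left
      refine ⟨h', ?_⟩
      have h3 : (3:ℝ) ≤ (s.m:ℝ) := by exact_mod_cast s.m_ge3 h'
      linarith
    · right
      exact ⟨h', by linarith⟩

/-- `x` determines `y` (uniqueness of the Galois conjugate). -/
lemma y_unique (t : St) (h : s.x = t.x) : s.y = t.y := by
  have r1 := s.root_x
  have r2 := t.root_x
  rw [← h] at r2
  have hK : ((t.a*s.b - s.a*t.b : ℤ):ℝ) * s.x + ((t.a*s.c - s.a*t.c : ℤ):ℝ) = 0 := by
    push_cast
    linear_combination (t.a:ℝ) * r1 - (s.a:ℝ) * r2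
  by_cases hK0 : t.a*s.b - s.a*t.b = 0
  · have hbb : (s.b:ℝ) * t.a = (t.b:ℝ) * s.a := by
      have : ((t.a*s.b - s.a*t.b : ℤ):ℝ) = 0 := by exact_mod_cast congrArg (Int.cast : ℤ → ℝ) hK0
      push_cast at this
      linarith
    rw [s.y_eq, t.y_eq, ← h]
    have ha1 := s.haR; have ha2 := t.haR
    field_simp
    linarith [hbb]
  · exfalso
    have hKR : ((t.a*s.b - s.a*t.b : ℤ):ℝ) ≠ 0 := Int.cast_ne_zero.mpr hK0
    apply s.hirr.ne_rat ((-(t.a*s.c - s.a*t.c) : ℚ)/((t.a*s.b - s.a*t.b : ℤ) : ℚ))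
    have : s.x = -((t.a*s.c - s.a*t.c : ℤ):ℝ)/((t.a*s.b - s.a*t.b : ℤ):ℝ) := by
      rw [eq_div_iff hKR]
      linear_combination hK
    rw [this]
    push_cast
    ring

lemma bound_pos (u : St) (hu : u.Red) (hux : 0 < u.x) :
    (u.m:ℝ) + u.next.y < 0 ∧ 1 - goldenRatio' ≤ (u.m:ℝ) + u.next.y := by
  have he : u.e = 1 := u.e_pos hux
  have hy := hu.y_le
  have hinv := u.inv_y
  rw [he] at hinv
  push_cast at hinv
  set A := (u.m:ℝ) + u.next.y with hA
  have htau := NIM.tau_gt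
  have hAne : A ≠ 0 := by
    intro h; rw [h] at hinv; simp at hinv; exact u.y_ne hinv
  have hA0 : A < 0 := by
    rcases lt_or_gt_of_ne hAne with h | h
    · exact h
    · exfalso
      have : 0 < u.y := by rw [hinv]; positivity
      linarith
  refine ⟨hA0, ?_⟩
  have h1 : 1/A ≤ -goldenRatio' := by rw [← hinv]; exact hy
  have h2 : 1 ≥ -goldenRatio' * A := by
    rw [div_le_iff_of_neg hA0] at h1
    linarith
  nlinarith [NIM.tau_inv, NIM.tau_pos]

lemma bound_neg (u : St) (hu : u.Red) (hux : u.x < 0) :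
    0 < (u.m:ℝ) + u.next.y ∧ (u.m:ℝ) + u.next.y ≤ 2 - goldenRatio' := by
  have he : u.e = -1 := u.e_neg hux
  have hy : u.y ≤ -goldenRatio' - 1 := by
    rcases hu with ⟨_, h⟩ | ⟨h, _⟩
    · exact h
    · linarith
  have hinv := u.inv_y
  rw [he] at hinv
  push_cast at hinv
  set A := (u.m:ℝ) + u.next.y with hA
  have htau := NIM.tau_gt
  have hAne : A ≠ 0 := by
    intro h; rw [h] at hinv; simp at hinv; exact u.y_ne hinv
  have hA0 : 0 < A := by
    rcases lt_or_gt_of_ne hAne with h | h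
    · exfalso
      have : 0 < u.y := by
        rw [hinv]
        exact div_pos_of_neg_of_neg (by norm_num) h
      linarith
    · exact h
  refine ⟨hA0, ?_⟩
  have h1 : -1/A ≤ -goldenRatio' - 1 := by rw [← hinv]; exact hy
  have h2 : -1 ≤ (-goldenRatio' - 1) * A := by
    rw [div_le_iff₀ hA0] at h1
    linarith
  nlinarith [NIM.tau_inv2, NIM.tau_pos]

lemma mixed_false (u v : St) (hu : u.Red) (hv : v.Red) (hux : 0 < u.x) (hvx : v.x < 0)
    (hxy : u.next.x = v.next.x) : False := by
  have hyy : u.next.y = v.next.y := u.next.y_unique v.next hxy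
  obtain ⟨hA1, hA2⟩ := u.bound_pos hu hux
  obtain ⟨hB1, hB2⟩ := v.bound_neg hv hvx
  rw [← hyy] at hB1 hB2
  set w := u.next.y with hw
  -- B - A = v.m - u.m ∈ (0,1] hence = 1, forcing A = 1 - τ
  have hd : ((v.m - u.m : ℤ):ℝ) = ((v.m:ℝ) + w) - ((u.m:ℝ) + w) := by push_cast; ring
  have hd1 : (0:ℝ) < ((v.m - u.m : ℤ):ℝ) := by rw [hd]; linarith
  have hd2 : ((v.m - u.m : ℤ):ℝ) ≤ 1 := by rw [hd]; linarith
  have hd3 : v.m - u.m = 1 := by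
    have h1 : 0 < v.m - u.m := by exact_mod_cast hd1
    have h2 : v.m - u.m ≤ 1 := by exact_mod_cast hd2
    omega
  have hdd : ((v.m:ℝ)) = (u.m:ℝ) + 1 := by
    have : ((v.m - u.m : ℤ):ℝ) = 1 := by exact_mod_cast congrArg (Int.cast : ℤ → ℝ) hd3
    push_cast at this
    linarith
  -- equality forcing
  have hAeq : (u.m:ℝ) + w = 1 - goldenRatio' := by
    have : (v.m:ℝ) + w ≤ 2 - goldenRatio' := hB2
    rw [hdd] at this
    linarith
  have hwval : w = 1 - goldenRatio' - u.m := by linarith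
  -- rationality argument
  set n := u.next with hn
  set z := n.x with hz
  have hzw : z * w = (n.c:ℝ)/(n.a:ℝ) := by
    rw [hz, hw, eq_div_iff n.haR]
    linear_combination -n.hc
  have hzsum : w = -(n.b:ℝ)/(n.a:ℝ) - z := n.y_eq
  -- so z = r + τ with r rational
  set q1 : ℚ := (-(n.b) : ℚ)/(n.a : ℚ) with hq1
  set q2 : ℚ := (n.c : ℚ)/(n.a : ℚ) with hq2
  have hq1R : ((q1:ℚ):ℝ) = -(n.b:ℝ)/(n.a:ℝ) := by rw [hq1]; push_cast; ring
  have hq2R : ((q2:ℚ):ℝ) = (n.c:ℝ)/(n.a:ℝ) := by rw [hq2]; push_cast; ring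
  set r : ℚ := q1 - 1 + u.m with hr
  have hzval : z = (r:ℝ) + goldenRatio' := by
    rw [hr]
    push_cast
    rw [hq1R]
    have := hzsum
    rw [hwval] at this
    linarith
  -- z*w = q2 gives τ*(r+u.m) = rational
  have hkey : goldenRatio' * ((r:ℝ) + (u.m:ℝ)) = (r:ℝ)*(1 - (u.m:ℝ)) - 1 - ((q2:ℚ):ℝ) := by
    have h1 : ((r:ℝ) + goldenRatio') * (1 - goldenRatio' - (u.m:ℝ)) = ((q2:ℚ):ℝ) := by
      rw [← hzval, ← hwval, hq2R]; exact hzw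
    nlinarith [NIM.tau_sq, h1]
  by_cases hr0 : r + (u.m : ℚ) = 0
  · -- z = τ - u.m, so u.x = 1/τ > 1/2, contradiction
    have : (r:ℝ) = -(u.m:ℝ) := by
      have : ((r + (u.m:ℚ) : ℚ):ℝ) = 0 := by rw [hr0]; norm_num
      push_cast at this
      linarith
    have hzt : (u.m:ℝ) + z = goldenRatio' := by rw [hzval, this]; ring
    have hux2 := u.hx2
    have hinvx := u.inv_x
    rw [u.e_pos hux] at hinvx
    push_cast at hinvx
    rw [← hn, ← hz] at hinvx
    rw [hzt] at hinvx
    have h12 : (1:ℝ)/goldenRatio' = goldenRatio' - 1 := by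
      rw [div_eq_iff (ne_of_gt NIM.tau_pos)]
      linarith [NIM.tau_inv]
    rw [h12] at hinvx
    have := NIM.tau_gt
    rw [hinvx] at hux2
    linarith
  · -- τ rational, contradiction
    apply NIM.tau_irr.ne_rat (((r*(1 - u.m) - 1 - q2)/(r + u.m)) : ℚ)
    have hrm : ((r:ℝ) + ((u.m:ℚ):ℝ)) ≠ 0 := by
      intro h
      apply hr0
      exact_mod_cast (by push_cast; exact h : ((r + (u.m:ℚ) : ℚ):ℝ) = 0)
    push_cast
    push_cast at hrm
    rw [eq_div_iff hrm]
    push_cast at hkey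
    linear_combination hkey

/-- injectivity of the step map on reduced states -/
lemma inj (u v : St) (hu : u.Red) (hv : v.Red) (hxy : u.next.x = v.next.x) : u.x = v.x := by
  have hyy : u.next.y = v.next.y := u.next.y_unique v.next hxy
  have htau := NIM.tau_gt
  rcases u.x_pos_or_neg with hux | hux <;> rcases v.x_pos_or_neg with hvx | hvx
  · -- both neg
    obtain ⟨hA1, hA2⟩ := u.bound_neg hu hux
    obtain ⟨hB1, hB2⟩ := v.bound_neg hv hvx
    rw [← hyy] at hB1 hB2
    have hm : u.m = v.m := by
      have htau2 := NIM.tau_lt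
      have h1 : -(1:ℝ) < ((u.m - v.m : ℤ):ℝ) := by push_cast; linarith
      have h2 : ((u.m - v.m : ℤ):ℝ) < 1 := by push_cast; linarith
      have h1' : -1 < u.m - v.m := by exact_mod_cast h1
      have h2' : u.m - v.m < 1 := by exact_mod_cast h2
      omega
    have h1 := u.inv_x
    have h2 := v.inv_x
    rw [u.e_neg hux, hm] at h1
    rw [v.e_neg hvx, ← hxy] at h2
    rw [h1, h2]
  · exact absurd (v.mixed_false u hv hu hvx hux hxy.symm) (fun h => h)
  · exact absurd (u.mixed_false v hu hv hux hvx hxy) (fun h => h)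
  · -- both pos
    obtain ⟨hA1, hA2⟩ := u.bound_pos hu hux
    obtain ⟨hB1, hB2⟩ := v.bound_pos hv hvx
    rw [← hyy] at hB1 hB2
    have hm : u.m = v.m := by
      have htau2 := NIM.tau_lt
      have h1 : -(1:ℝ) < ((u.m - v.m : ℤ):ℝ) := by push_cast; linarith
      have h2 : ((u.m - v.m : ℤ):ℝ) < 1 := by push_cast; linarith
      have h1' : -1 < u.m - v.m := by exact_mod_cast h1
      have h2' : u.m - v.m < 1 := by exact_mod_cast h2
      omega
    have h1 := u.inv_x
    have h2 := v.inv_x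
    rw [u.e_pos hux, hm] at h1
    rw [v.e_pos hvx, ← hxy] at h2
    rw [h1, h2]

open St

noncomputable def orb (s₀ : St) (n : ℕ) : St := St.next^[n] s₀

lemma orb_zero (s₀ : St) : orb s₀ 0 = s₀ := rfl

lemma orb_succ (s₀ : St) (n : ℕ) : orb s₀ (n+1) = (orb s₀ n).next :=
  Function.iterate_succ_apply' _ _ _

lemma orb_add (s₀ : St) (m n : ℕ) : orb s₀ (m + n) = orb (orb s₀ n) m :=
  Function.iterate_add_apply _ _ _ _

lemma orb_x (s₀ : St) (n : ℕ) : (orb s₀ n).x = nearestIntMap^[n] s₀.x := by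
  induction n with
  | zero => rfl
  | succ k ih =>
    rw [orb_succ, Function.iterate_succ_apply', ← ih, St.next_x_nim]

lemma red_orb (s₀ : St) (h : s₀.Red) (n : ℕ) : (orb s₀ n).Red := by
  induction n with
  | zero => exact h
  | succ k ih => rw [orb_succ]; exact (orb s₀ k).red_next ih

lemma disc_orb (s₀ : St) (n : ℕ) : (orb s₀ n).disc = s₀.disc := by
  induction n with
  | zero => rfl
  | succ k ih => rw [orb_succ, St.disc_next, ih]

/-- For reduced states, `x - y > 1`. -/
lemma red_gap (s : St) (h : s.Red) : 1 < s.x - s.y := by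
  have h1 := s.hx1
  have h2 := h.y_le
  have := tau_gt
  linarith

lemma red_disc_pos (s : St) (h : s.Red) : 1 ≤ s.disc := by
  have hg := red_gap s h
  have hd := s.disc_eq
  have ha := s.haR
  have hsq : (1:ℝ) ≤ (s.x - s.y)^2 := by nlinarith
  have hap : (0:ℝ) < (s.a:ℝ)^2 := by positivity
  have h0 : (0:ℝ) < (s.disc:ℝ) := by
    rw [hd]
    nlinarith [mul_le_mul_of_nonneg_left hsq (le_of_lt hap)]
  have : (0:ℤ) < s.disc := by exact_mod_cast h0
  omega

lemma red_a_bound (s : St) (h : s.Red) : s.a^2 ≤ s.disc := by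
  have hg := red_gap s h
  have hd := s.disc_eq
  have hsq : (1:ℝ) ≤ (s.x - s.y)^2 := by nlinarith
  have hap : (0:ℝ) ≤ (s.a:ℝ)^2 := sq_nonneg _
  have h1 : ((s.a^2 : ℤ):ℝ) ≤ ((s.disc:ℤ):ℝ) := by
    push_cast
    rw [hd]
    nlinarith [mul_le_mul_of_nonneg_left hsq hap]
  exact_mod_cast h1

lemma red_b_bound (s : St) (h : s.Red) : s.b^2 ≤ 4 * s.disc := by
  have hg := red_gap s h
  have hd := s.disc_eq
  have hx1 := s.hx1
  have hy := h.y_neg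
  have hx2 := s.hx2
  have h1 : ((s.b^2 : ℤ):ℝ) ≤ ((4 * s.disc : ℤ):ℝ) := by
    push_cast
    rw [hd]
    have hb := s.hb
    have key : (s.b:ℝ)^2 = (s.a:ℝ)^2 * (s.x + s.y)^2 := by rw [hb]; ring
    rw [key]
    have habs : (s.x + s.y)^2 ≤ ((s.x - s.y) + 1)^2 := by nlinarith
    have habs2 : ((s.x - s.y) + 1)^2 ≤ 4 * (s.x - s.y)^2 := by nlinarith
    have hap : (0:ℝ) ≤ (s.a:ℝ)^2 := sq_nonneg _
    have c1 := mul_le_mul_of_nonneg_left habs hap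
    have c2 := mul_le_mul_of_nonneg_left habs2 hap
    nlinarith [c1, c2]
  exact_mod_cast h1

/-- two reduced states with the same invariants and equal `(a, b)` have equal `x`. -/
lemma red_eq_of (s t : St) (hs : s.Red) (ht : t.Red) (hd : s.disc = t.disc)
    (hA : s.a = t.a) (hB : s.b = t.b) : s.x = t.x := by
  have hC : s.c = t.c := by
    have := hd
    unfold St.disc at this
    rw [hA, hB] at this
    have h4 : (4 * t.a) * s.c = (4 * t.a) * t.c := by omega
    exact mul_left_cancel₀ (by simp [t.ha] : (4 * t.a : ℤ) ≠ 0) h4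
  -- t.x is a root of s's quadratic
  have hroot : (s.a:ℝ) * (t.x - s.x) * (t.x - s.y) = 0 := by
    have h1 := t.root_x
    rw [← hA, ← hB, ← hC] at h1
    have h2 := s.hb
    have h3 := s.hc
    linear_combination h1 - t.x * h2 - h3
  have ha := s.haR
  rcases mul_eq_zero.mp hroot with h | h
  · rcases mul_eq_zero.mp h with h | h
    · exact absurd h ha
    · linarith [sub_eq_zero.mp h]
  · exfalso
    have hts : t.x = s.y := by linarith [sub_eq_zero.mp h]
    linarith [t.hx1, hs.y_le, tau_gt, hts.symm.le, hts.le, hts.ge]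

/-- descent along the orbit using injectivity -/
lemma orb_cancel (s₀ : St) (h : s₀.Red) : ∀ m n : ℕ, m ≤ n →
    (orb s₀ m).x = (orb s₀ n).x → s₀.x = (orb s₀ (n - m)).x := by
  intro m
  induction m with
  | zero => intro n _ he; simpa [orb_zero] using he
  | succ k ih =>
    intro n hmn he
    obtain ⟨n', rfl⟩ : ∃ n', n = n' + 1 := ⟨n - 1, by omega⟩
    rw [orb_succ, orb_succ] at he
    have hk : (orb s₀ k).x = (orb s₀ n').x :=
      St.inj _ _ (red_orb s₀ h k) (red_orb s₀ h n') he
    have := ih n' (by omega) hk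
    simpa [Nat.succ_sub_succ] using this

/-- Direction (⇐): reduced implies purely periodic. -/
theorem periodic_of_red (s₀ : St) (h : s₀.Red) : ∃ p : ℕ, 1 ≤ p ∧ (orb s₀ p).x = s₀.x := by
  classical
  set D := s₀.disc with hD
  set S : Finset (ℤ × ℤ) := Finset.Icc (-D) D ×ˢ Finset.Icc (-(4*D)) (4*D) with hS
  have hmap : ∀ n ∈ Finset.range (S.card + 1), ((orb s₀ n).a, (orb s₀ n).b) ∈ S := by
    intro n _
    have hred := red_orb s₀ h n
    have hd := disc_orb s₀ n
    have hD1 : 1 ≤ D := red_disc_pos s₀ h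
    have ha2 : (orb s₀ n).a^2 ≤ D := by rw [hD, ← hd]; exact red_a_bound _ hred
    have hb2 : (orb s₀ n).b^2 ≤ 4*D := by rw [hD, ← hd]; exact red_b_bound _ hred
    simp only [hS, Finset.mem_product, Finset.mem_Icc]
    constructor
    · constructor <;> nlinarith [sq_nonneg ((orb s₀ n).a - 1), sq_nonneg ((orb s₀ n).a + 1)]
    · constructor <;> nlinarith [sq_nonneg ((orb s₀ n).b - 1), sq_nonneg ((orb s₀ n).b + 1)]
  obtain ⟨i, hi, j, hj, hij, hfe⟩ :=
    Finset.exists_ne_map_eq_of_card_lt_of_maps_to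
      (by rw [Finset.card_range]; omega) hmap
  have hxe : (orb s₀ i).x = (orb s₀ j).x :=
    red_eq_of _ _ (red_orb s₀ h i) (red_orb s₀ h j)
      (by rw [disc_orb, disc_orb])
      (congrArg Prod.fst hfe) (congrArg Prod.snd hfe)
  rcases lt_or_gt_of_ne hij with hlt | hlt
  · exact ⟨j - i, by omega, (orb_cancel s₀ h i j (by omega) hxe).symm⟩
  · exact ⟨i - j, by omega, (orb_cancel s₀ h j i (by omega) hxe.symm).symm⟩


/-- `next.x` depends only on `x`. -/
lemma next_x_congr (s t : St) (h : s.x = t.x) : s.next.x = t.next.x := by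
  rw [s.next_x, t.next_x]
  unfold St.e St.m
  rw [h]

lemma orb_x_congr (s t : St) (h : s.x = t.x) (n : ℕ) : (orb s n).x = (orb t n).x := by
  induction n with
  | zero => exact h
  | succ k ih => rw [orb_succ, orb_succ]; exact next_x_congr _ _ ih

/-- the absorbing region `y < -1`. -/
lemma absorb (s : St) (hy : s.y < -1) : s.next.y < -1 := by
  have hm := s.mR_ge2
  have hy0 : s.y < 0 := by linarith
  have h1 : (s.e:ℝ)/s.y < 1 := by
    have habs : |(s.e:ℝ)/s.y| < 1 := by
      rw [abs_div]
      have he : |(s.e:ℝ)| = 1 := by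
        have : s.e = 1 ∨ s.e = -1 := by unfold e; split; exact Or.inl rfl; exact Or.inr rfl
        rcases this with h | h <;> rw [h] <;> norm_num
      rw [he]
      rw [div_lt_one (by rw [abs_of_neg hy0]; linarith)]
      rw [abs_of_neg hy0]; linarith
    exact lt_of_le_of_lt (le_abs_self _) habs
  rw [next_y]
  linarith

lemma red_next_of_pos (s : St) (hy : s.y < -1) (hx : 0 < s.x) : s.next.Red := by
  have he : s.e = 1 := s.e_pos hx
  have hm := s.mR_ge2
  have hy0 : s.y < 0 := by linarith
  have h1 : (1:ℝ)/s.y < 0 := div_neg_of_pos_of_neg one_pos hy0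
  have hty : s.next.y < -(s.m:ℝ) := by
    rw [next_y, he]; push_cast; linarith
  have htau := tau_lt
  rcases s.next.x_pos_or_neg with h' | h'
  · left
    refine ⟨h', ?_⟩
    have h3 : (3:ℝ) ≤ (s.m:ℝ) := by exact_mod_cast s.m_ge3 h'
    linarith
  · right
    exact ⟨h', by linarith⟩


section Periodic

lemma per_x (s₀ : St) (p : ℕ) (hpx : (orb s₀ p).x = s₀.x) (n : ℕ) : (orb s₀ (n + p)).x = (orb s₀ n).x := by
  rw [orb_add]
  exact orb_x_congr _ _ hpx n

lemma per_mul (s₀ : St) (p : ℕ) (hpx : (orb s₀ p).x = s₀.x) (k n : ℕ) : (orb s₀ (n + k * p)).x = (orb s₀ n).x := by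
  induction k with
  | zero => simp
  | succ j ih =>
    have : n + (j+1) * p = (n + j * p) + p := by ring
    rw [this, per_x s₀ p hpx, ih]

lemma per_y_mul (s₀ : St) (p : ℕ) (hpx : (orb s₀ p).x = s₀.x) (k n : ℕ) : (orb s₀ (n + k * p)).y = (orb s₀ n).y :=
  (orb s₀ (n + k * p)).y_unique _ (per_mul s₀ p hpx k n)

lemma red_base_of_orb (s₀ : St) (p : ℕ) (hp1 : 1 ≤ p) (hpx : (orb s₀ p).x = s₀.x) (N : ℕ) (hN : (orb s₀ N).Red) : s₀.Red := by
  have hfrom : ∀ j, (orb s₀ (N + j)).Red := by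
    intro j
    induction j with
    | zero => simpa using hN
    | succ i ih =>
      have : N + (i+1) = (N + i) + 1 := by omega
      rw [this, orb_succ]
      exact (orb s₀ (N + i)).red_next ih
  have hNp : (orb s₀ (N * p)).Red := by
    have h1 : N ≤ N * p := Nat.le_mul_of_pos_right N (by omega)
    have : N * p = N + (N * p - N) := by omega
    rw [this]; exact hfrom _
  have hx : (orb s₀ (N * p)).x = s₀.x := by
    have := per_mul s₀ p hpx N 0
    simpa [orb_zero] using this
  have hy : (orb s₀ (N * p)).y = s₀.y := (orb s₀ (N * p)).y_unique s₀ hx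
  rcases hNp with ⟨h1, h2⟩ | ⟨h1, h2⟩
  · left; rw [hx, hy] at *; exact ⟨h1, h2⟩
  · right; rw [hx, hy] at *; exact ⟨h1, h2⟩

end Periodic


lemma e_abs (s : St) : |(s.e:ℝ)| = 1 := by
  have : s.e = 1 ∨ s.e = -1 := by unfold e; split; exact Or.inl rfl; exact Or.inr rfl
  rcases this with h | h <;> rw [h] <;> norm_num

lemma contract (u : St) (h : -1 < u.next.y) :
    |u.x - u.y| ≤ 2/3 * |u.next.x - u.next.y| := by
  have hm := u.mR_ge2
  have hx1 := u.next.hx1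
  have hP : (3:ℝ)/2 ≤ (u.m:ℝ) + u.next.x := by linarith
  have hQ : (1:ℝ) < (u.m:ℝ) + u.next.y := by linarith
  have hP0 : ((u.m:ℝ) + u.next.x) ≠ 0 := by linarith
  have hQ0 : ((u.m:ℝ) + u.next.y) ≠ 0 := by linarith
  have hPQ : (3:ℝ)/2 ≤ ((u.m:ℝ) + u.next.x) * ((u.m:ℝ) + u.next.y) := by nlinarith
  have hd : u.x - u.y =
      (u.e:ℝ) * (u.next.y - u.next.x) / (((u.m:ℝ) + u.next.x) * ((u.m:ℝ) + u.next.y)) := by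
    rw [u.inv_x, u.inv_y]
    field_simp
    ring
  rw [hd, abs_div, abs_mul, u.e_abs, one_mul, abs_of_pos (by linarith : (0:ℝ) <
    ((u.m:ℝ) + u.next.x) * ((u.m:ℝ) + u.next.y))]
  rw [div_le_iff₀ (by linarith)]
  have h1 : |u.next.y - u.next.x| = |u.next.x - u.next.y| := abs_sub_comm _ _
  nlinarith [abs_nonneg (u.next.x - u.next.y), h1]

noncomputable def xstar : ℝ := (Real.sqrt 5 - 3)/2

lemma xstar_neg : xstar < 0 := by unfold xstar; nlinarith [NIM.sqrt5_lt]
lemma xstar_gt : -(1:ℝ)/2 < xstar := by unfold xstar; nlinarith [NIM.sqrt5_gt]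
lemma xstar_root : xstar^2 + 3*xstar + 1 = 0 := by
  unfold xstar
  nlinarith [Real.sq_sqrt (by norm_num : (5:ℝ) ≥ 0)]
lemma xstar_inv : xstar = -1/(3 + xstar) := by
  have h1 : (0:ℝ) < 3 + xstar := by nlinarith [xstar_gt]
  rw [eq_div_iff (by linarith)]
  nlinarith [xstar_root]

lemma contract3 (u : St) (hm : u.m = 3) (he : u.e = -1) :
    |u.x - xstar| ≤ 4/25 * |u.next.x - xstar| := by
  have hx1 := u.next.hx1
  have hP : (5:ℝ)/2 ≤ 3 + u.next.x := by linarith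
  have hQ : (5:ℝ)/2 ≤ 3 + xstar := by nlinarith [NIM.sqrt5_gt, xstar_gt]; 
  have hux : u.x = -1/(3 + u.next.x) := by
    have := u.inv_x
    rw [he, hm] at this
    push_cast at this
    convert this using 2 <;> norm_num
  have hd : u.x - xstar = (u.next.x - xstar) / ((3 + u.next.x) * (3 + xstar)) := by
    rw [hux]
    nth_rewrite 1 [xstar_inv]
    field_simp
    ring
  rw [hd, abs_div, abs_of_pos (by nlinarith : (0:ℝ) < (3 + u.next.x) * (3 + xstar))]
  rw [div_le_iff₀ (by nlinarith)]
  have h25 : 25/4 ≤ (3 + u.next.x) * (3 + xstar) := by nlinarith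
  have hh := mul_le_mul_of_nonneg_left h25 (abs_nonneg (u.next.x - xstar))
  nlinarith [hh]


theorem red_of_periodic (s₀ : St) (p : ℕ) (hp1 : 1 ≤ p) (hpx : (orb s₀ p).x = s₀.x) :
    s₀.Red := by
  by_contra hnr
  have hnored : ∀ n, ¬ (orb s₀ n).Red := fun n hr => hnr (red_base_of_orb s₀ p hp1 hpx n hr)
  have hpy : (orb s₀ p).y = s₀.y := (orb s₀ p).y_unique s₀ hpx
  -- Step A: some conjugate drops below -1
  have hA : ∃ n, (orb s₀ n).y < -1 := by
    by_contra hno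
    push_neg at hno
    have h2 : ∀ n, -1 < (orb s₀ n).y := by
      intro n
      rcases lt_or_eq_of_le (hno n) with h | h
      · exact h
      · exact absurd h.symm (by simpa using (orb s₀ n).y_irr.ne_int (-1))
    have hlt1 : ∀ n, (orb s₀ n).y < 1 := by
      intro n
      by_contra hge
      push_neg at hge
      have hgt : 1 < (orb s₀ n).y := lt_of_le_of_ne hge (Ne.symm ((orb s₀ n).y_irr.ne_one))
      have habs : |((orb s₀ n).e:ℝ)/(orb s₀ n).y| < 1 := by
        rw [abs_div, (orb s₀ n).e_abs]
        rw [div_lt_one (by rw [abs_of_pos (by linarith)]; linarith)]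
        rw [abs_of_pos (by linarith : (0:ℝ) < (orb s₀ n).y)]
        exact hgt
      have hm := (orb s₀ n).mR_ge2
      have hlt : (orb s₀ (n+1)).y < -1 := by
        rw [orb_succ, next_y]
        have := lt_of_le_of_lt (le_abs_self _) habs
        linarith
      linarith [h2 (n+1)]
    have hstep : ∀ n, |(orb s₀ n).x - (orb s₀ n).y| ≤
        2/3 * |(orb s₀ (n+1)).x - (orb s₀ (n+1)).y| := by
      intro n
      rw [orb_succ]
      exact (orb s₀ n).contract (by rw [← orb_succ]; exact h2 (n+1))
    have hiter : ∀ n, |s₀.x - s₀.y| ≤ (2/3)^n * |(orb s₀ n).x - (orb s₀ n).y| := by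
      intro n
      induction n with
      | zero => simp [orb_zero]
      | succ k ih =>
        calc |s₀.x - s₀.y| ≤ (2/3)^k * |(orb s₀ k).x - (orb s₀ k).y| := ih
        _ ≤ (2/3)^k * (2/3 * |(orb s₀ (k+1)).x - (orb s₀ (k+1)).y|) :=
            mul_le_mul_of_nonneg_left (hstep k) (by positivity)
        _ = (2/3)^(k+1) * |(orb s₀ (k+1)).x - (orb s₀ (k+1)).y| := by ring
    have hp' := hiter p
    rw [hpx, hpy] at hp'
    have hpos : 0 < |s₀.x - s₀.y| :=
      abs_pos.mpr (sub_ne_zero.mpr (Ne.symm s₀.y_ne_x))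
    have hpow : (2/3:ℝ)^p < 1 := pow_lt_one₀ (by norm_num) (by norm_num) (by omega)
    nlinarith [hp', hpos, hpow]
  -- Step B: all conjugates below -1
  obtain ⟨n₀, hn₀⟩ := hA
  have hfrom : ∀ j, (orb s₀ (n₀ + j)).y < -1 := by
    intro j
    induction j with
    | zero => simpa using hn₀
    | succ i ih =>
      have : n₀ + (i+1) = (n₀ + i) + 1 := by omega
      rw [this, orb_succ]
      exact (orb s₀ (n₀ + i)).absorb ih
  have hall : ∀ n, (orb s₀ n).y < -1 := by
    intro n
    have hle : n₀ ≤ n + n₀ * p := by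
      calc n₀ ≤ n₀ * p := Nat.le_mul_of_pos_right n₀ (by omega)
      _ ≤ n + n₀ * p := by omega
    have h1 : (orb s₀ (n₀ + (n + n₀ * p - n₀))).y < -1 := hfrom _
    have h2 : n₀ + (n + n₀ * p - n₀) = n + n₀ * p := by omega
    rw [h2] at h1
    rw [per_y_mul s₀ p hpx n₀ n] at h1
    exact h1
  -- Step C: all x negative
  have hxneg : ∀ n, (orb s₀ n).x < 0 := by
    intro n
    rcases (orb s₀ n).x_pos_or_neg with h | h
    · exact h
    · exfalso
      apply hnored (n+1)
      rw [orb_succ]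
      exact (orb s₀ n).red_next_of_pos (hall n) h
  -- Step D: all conjugates above -τ-1
  have hygt : ∀ n, -goldenRatio' - 1 < (orb s₀ n).y := by
    intro n
    by_contra hle
    push_neg at hle
    exact hnored n (Or.inl ⟨hxneg n, hle⟩)
  -- Step E: all partial quotients equal 3
  have hm3 : ∀ n, (orb s₀ n).m = 3 := by
    intro n
    have hm2 := (orb s₀ n).m_ge2
    have he := (orb s₀ n).e_neg (hxneg n)
    rcases (by omega : (orb s₀ n).m = 2 ∨ (orb s₀ n).m = 3 ∨ 4 ≤ (orb s₀ n).m) with h | h | h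
    · exfalso
      have := (orb s₀ n).m2_pos h
      rw [← orb_succ] at this
      linarith [hxneg (n+1)]
    · exact h
    · exfalso
      have hy := hall n
      have hinv : (0:ℝ) < -1/(orb s₀ n).y := by
        apply div_pos_of_neg_of_neg (by norm_num)
        linarith
      have hinv2 : -1/(orb s₀ n).y < 1 := by
        have hrw : -1/(orb s₀ n).y = 1/(-(orb s₀ n).y) := by ring
        rw [hrw, div_lt_one (by linarith : (0:ℝ) < -(orb s₀ n).y)]
        linarith
      have hm4 : (4:ℝ) ≤ ((orb s₀ n).m : ℝ) := by exact_mod_cast h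
      have : (orb s₀ (n+1)).y < -3 := by
        rw [orb_succ, next_y, he]
        push_cast
        linarith
      have := hygt (n+1)
      have := tau_lt
      linarith
  -- Step F: x₀ = xstar
  have hstep2 : ∀ n, |(orb s₀ n).x - xstar| ≤ 4/25 * |(orb s₀ (n+1)).x - xstar| := by
    intro n
    rw [orb_succ]
    exact (orb s₀ n).contract3 (hm3 n) ((orb s₀ n).e_neg (hxneg n))
  have hiter2 : ∀ n, |s₀.x - xstar| ≤ (4/25)^n * |(orb s₀ n).x - xstar| := by
    intro n
    induction n with
    | zero => simp [orb_zero]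
    | succ k ih =>
      calc |s₀.x - xstar| ≤ (4/25)^k * |(orb s₀ k).x - xstar| := ih
      _ ≤ (4/25)^k * (4/25 * |(orb s₀ (k+1)).x - xstar|) :=
          mul_le_mul_of_nonneg_left (hstep2 k) (by positivity)
      _ = (4/25)^(k+1) * |(orb s₀ (k+1)).x - xstar| := by ring
  have hx0 : s₀.x = xstar := by
    have hp' := hiter2 p
    rw [hpx] at hp'
    have hpow : (4/25:ℝ)^p < 1 := pow_lt_one₀ (by norm_num) (by norm_num) (by omega)
    have : |s₀.x - xstar| ≤ 0 := by nlinarith [abs_nonneg (s₀.x - xstar)]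
    have := le_antisymm this (abs_nonneg _)
    rw [abs_eq_zero, sub_eq_zero] at this
    exact this
  -- Step G: then b = 3a and y₀ = -τ-1, so s₀ is reduced after all
  apply hnr
  have hroot := s₀.root_x
  have hsq : s₀.x^2 = -3*s₀.x - 1 := by
    rw [hx0]
    nlinarith [xstar_root]
  have hlin : ((s₀.b - 3*s₀.a : ℤ):ℝ) * s₀.x + ((s₀.c - s₀.a : ℤ):ℝ) = 0 := by
    push_cast
    linear_combination hroot - (s₀.a:ℝ)*hsq
  have hba : s₀.b = 3*s₀.a := by
    by_contra hba
    have hK : ((s₀.b - 3*s₀.a : ℤ):ℝ) ≠ 0 := by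
      intro h
      exact hba (by exact_mod_cast sub_eq_zero.mp (by exact_mod_cast h) : s₀.b = 3*s₀.a)
    apply s₀.hirr.ne_rat ((-(s₀.c - s₀.a) : ℚ)/((s₀.b - 3*s₀.a : ℤ) : ℚ))
    have : s₀.x = -((s₀.c - s₀.a : ℤ):ℝ)/((s₀.b - 3*s₀.a : ℤ):ℝ) := by
      rw [eq_div_iff hK]
      linear_combination hlin
    rw [this]
    push_cast
    ring
  have hy0 : s₀.y = -3 - s₀.x := by
    rw [s₀.y_eq, hba]
    have := s₀.haR
    push_cast
    field_simp
  left
  constructor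
  · rw [hx0]; exact xstar_neg
  · rw [hy0, hx0]
    unfold xstar goldenRatio'
    ring_nf
    linarith [NIM.sqrt5_gt]
end St
end NIM

/-- A quadratic irrational `ω ∈ (-1/2,1/2)` is purely periodic under the Nearest Integer
map iff its Galois conjugate `ω' = -b/a - ω` satisfies `ω' ≤ -τ-1` in case `ω < 0`, or
`ω' ≤ -τ` in case `ω > 0`. -/
theorem nearestInt_purely_periodic_iff
    (ω : ℝ) (hmem : ω ∈ Set.Ioo (-(1:ℝ)/2) (1/2)) (hirr : Irrational ω)
    (a b c : ℤ) (ha : a ≠ 0)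
    (hroot : (a : ℝ) * ω ^ 2 + (b : ℝ) * ω + (c : ℝ) = 0) :
    (∃ p : ℕ, 1 ≤ p ∧ nearestIntMap^[p] ω = ω) ↔
      ((ω < 0 ∧ -(b : ℝ) / (a : ℝ) - ω ≤ -goldenRatio' - 1) ∨
       (0 < ω ∧ -(b : ℝ) / (a : ℝ) - ω ≤ -goldenRatio')) := by
  have haR : (a:ℝ) ≠ 0 := Int.cast_ne_zero.mpr ha
  set s₀ : NIM.St :=
    { x := ω
      y := -(b:ℝ)/(a:ℝ) - ω
      a := a
      b := b
      c := c
      ha := ha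
      hx1 := hmem.1
      hx2 := hmem.2
      hirr := hirr
      hb := by field_simp; ring
      hc := by
        have h1 : (a:ℝ)*ω*(-(b:ℝ)/(a:ℝ) - ω) = -(b:ℝ)*ω - (a:ℝ)*ω^2 := by
          field_simp
        rw [h1]; linarith [hroot] } with hs₀
  have hRed : s₀.Red ↔
      ((ω < 0 ∧ -(b : ℝ) / (a : ℝ) - ω ≤ -goldenRatio' - 1) ∨
       (0 < ω ∧ -(b : ℝ) / (a : ℝ) - ω ≤ -goldenRatio')) := Iff.rfl
  constructor
  · rintro ⟨p, hp1, hp⟩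
    rw [← hRed]
    apply NIM.St.red_of_periodic s₀ p hp1
    rw [NIM.St.orb_x]
    exact hp
  · intro h
    obtain ⟨p, hp1, hp⟩ := NIM.St.periodic_of_red s₀ (hRed.mpr h)
    refine ⟨p, hp1, ?_⟩
    rw [NIM.St.orb_x] at hp
    exact hp
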